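/- arXiv:1810.05855 — 3 statements merged into one kernel-verified Lean document; each statement's English description precedes it below -/
import Mathlib

section
/- Let U₁, …, U_L be real random variables in L²(P), let W = (W_{ij}) be an L×L random matrix whose entries are G-measurable, and assume W_{ij}·U_i ∈ L² and W_{ij}·U_j ∈ L² with ‖W_{ij}·U_i‖₂ ≤ K and ‖W_{ij}·U_j‖₂ ≤ K for all i, j, that the quadratic form Q := Σ_{i,j} U_i W_{ij} U_j is integrable, and that ‖U_i − E[U_i|G]‖₂ ≤ δ for all i. Then E| Q − E[Q|G] | ≤ 4·K·L²·δ. (This is the quantitative core of the paper's Lemma 1: if the responses are L²-near-epoch dependent with coefficient δ, the groupwise GEE objective q_g is L¹-near-epoch dependent with coefficient proportional to L²δ.) -/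
open MeasureTheory ProbabilityTheory ENNReal Finset

private lemma holder_mul' {Ω : Type*} {F : MeasurableSpace Ω} {P : Measure Ω} {f g : Ω → ℝ}
    (hf : AEStronglyMeasurable f P) (hg : AEStronglyMeasurable g P) :
    eLpNorm (fun ω => f ω * g ω) 1 P ≤ eLpNorm f 2 P * eLpNorm g 2 P := by
  haveI : ENNReal.HolderTriple 2 2 1 := ⟨by simp only [inv_one]; exact ENNReal.inv_two_add_inv_two⟩
  have h := eLpNorm_smul_le_mul_eLpNorm (p := 2) (q := 2) (r := 1) hg hf
  exact h

private lemma memLp_mul' {Ω : Type*} {F : MeasurableSpace Ω} {P : Measure Ω} {f g : Ω → ℝ}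
    (hf : MemLp f 2 P) (hg : MemLp g 2 P) :
    Integrable (fun ω => f ω * g ω) P := by
  rw [← memLp_one_iff_integrable]
  haveI : ENNReal.HolderTriple 2 2 1 := ⟨by simp only [inv_one]; exact ENNReal.inv_two_add_inv_two⟩
  have h := hg.smul (φ := f) hf (p := 2) (q := 2) (r := 1)
  exact h

private lemma condexp_L2_contract {Ω : Type*} {F : MeasurableSpace Ω} {P : Measure Ω}
    [IsProbabilityMeasure P] {G : MeasurableSpace Ω} (hG : G ≤ F) {f : Ω → ℝ}
    (hf : MemLp f 2 P) : eLpNorm (P[f|G]) 2 P ≤ eLpNorm f 2 P := by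
  have hcd : (P[f|G]) =ᵐ[P] (condExpL2 ℝ ℝ hG (hf.toLp f) : Ω → ℝ) := by
    refine (ae_eq_condExp_of_forall_setIntegral_eq hG (hf.integrable one_le_two)
      (fun s hs hμs => integrableOn_condExpL2_of_measure_ne_top hG hμs.ne _)
      (fun s hs hμs => ?_) (aestronglyMeasurable_condExpL2 hG _)).symm
    rw [integral_condExpL2_eq hG (hf.toLp f) hs hμs.ne]
    exact integral_congr_ae (ae_restrict_of_ae hf.coeFn_toLp)
  calc eLpNorm (P[f|G]) 2 P
      = eLpNorm (condExpL2 ℝ ℝ hG (hf.toLp f) : Ω → ℝ) 2 P := eLpNorm_congr_ae hcd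
    _ ≤ eLpNorm (hf.toLp f : Ω → ℝ) 2 P := eLpNorm_condExpL2_le hG _
    _ = eLpNorm f 2 P := eLpNorm_congr_ae hf.coeFn_toLp

private lemma term_bound {Ω : Type*} {F : MeasurableSpace Ω} {P : Measure Ω}
    [IsProbabilityMeasure P] {G : MeasurableSpace Ω} (hG : G ≤ F)
    {u v w : Ω → ℝ} (hu : MemLp u 2 P) (hv : MemLp v 2 P)
    (hw : StronglyMeasurable[G] w)
    (hwu : MemLp (fun ω => w ω * u ω) 2 P)
    (hwv : MemLp (fun ω => w ω * v ω) 2 P)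
    {K δ : ℝ≥0∞}
    (hKu : eLpNorm (fun ω => w ω * u ω) 2 P ≤ K)
    (hKv : eLpNorm (fun ω => w ω * v ω) 2 P ≤ K)
    (hδu : eLpNorm (fun ω => u ω - (P[u|G]) ω) 2 P ≤ δ)
    (hδv : eLpNorm (fun ω => v ω - (P[v|G]) ω) 2 P ≤ δ) :
    eLpNorm (fun ω => u ω * w ω * v ω - (P[fun ω => u ω * w ω * v ω|G]) ω) 1 P ≤
      4 * K * δ := by
  haveI : SigmaFinite (P.trim hG) := inferInstance
  set T : Ω → ℝ := fun ω => u ω * w ω * v ω with hT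
  set A : Ω → ℝ := fun ω => w ω * u ω with hA
  set Abar : Ω → ℝ := P[A|G] with hAbar
  set ubar : Ω → ℝ := P[u|G] with hubar
  set vbar : Ω → ℝ := P[v|G] with hvbar
  set Z : Ω → ℝ := fun ω => Abar ω * vbar ω with hZ
  have hcem : AEStronglyMeasurable[F] (P[T|G]) P :=
    ((stronglyMeasurable_condExp (m := G) (μ := P) (f := T)).mono hG).aestronglyMeasurable
  have hAbar2 : MemLp Abar 2 P :=
    ⟨((stronglyMeasurable_condExp (m := G) (μ := P) (f := A)).mono hG).aestronglyMeasurable,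
      lt_of_le_of_lt (condexp_L2_contract hG hwu) hwu.2⟩
  have hvbar2 : MemLp vbar 2 P :=
    ⟨((stronglyMeasurable_condExp (m := G) (μ := P) (f := v)).mono hG).aestronglyMeasurable,
      lt_of_le_of_lt (condexp_L2_contract hG hv) hv.2⟩
  have hub : AEStronglyMeasurable[F] (fun ω => u ω - ubar ω) P :=
    hu.1.sub ((stronglyMeasurable_condExp (m := G) (μ := P) (f := u)).mono hG).aestronglyMeasurable
  have hvb : AEStronglyMeasurable[F] (fun ω => v ω - vbar ω) P :=
    hv.1.sub ((stronglyMeasurable_condExp (m := G) (μ := P) (f := v)).mono hG).aestronglyMeasurable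
  have hTeq : T = fun ω => (w ω * u ω) * v ω := by funext ω; simp only [hT]; ring
  have hTint : Integrable T P := by rw [hTeq]; exact memLp_mul' hwu hv
  have hZint : Integrable Z P := memLp_mul' hAbar2 hvbar2
  have hZmeas : StronglyMeasurable[G] Z :=
    stronglyMeasurable_condExp.mul stronglyMeasurable_condExp
  have hZce : P[Z|G] = Z := condExp_of_stronglyMeasurable hG hZmeas hZint
  -- pull-out property
  have hpull : Abar =ᵐ[P] fun ω => w ω * ubar ω := by
    have := condExp_mul_of_stronglyMeasurable_left (μ := P) (f := w) (g := u) hw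
      (hwu.integrable one_le_two) (hu.integrable one_le_two)
    exact this
  -- key decomposition
  have hdecomp : (fun ω => T ω - Z ω) =ᵐ[P]
      (fun ω => (u ω - ubar ω) * (w ω * v ω)) + (fun ω => Abar ω * (v ω - vbar ω)) := by
    filter_upwards [hpull] with ω hω
    simp only [hT, hZ, Pi.add_apply]
    rw [hω]
    ring
  -- bound eLpNorm (T - Z)
  have hb1 : eLpNorm (fun ω => (u ω - ubar ω) * (w ω * v ω)) 1 P ≤ δ * K := by
    refine (holder_mul' hub hwv.1).trans (mul_le_mul' hδu hKv)
  have hb2 : eLpNorm (fun ω => Abar ω * (v ω - vbar ω)) 1 P ≤ K * δ := by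
    refine (holder_mul' hAbar2.1 hvb).trans
      (mul_le_mul' ((condexp_L2_contract hG hwu).trans hKu) hδv)
  have hTZ : eLpNorm (fun ω => T ω - Z ω) 1 P ≤ K * δ + K * δ := by
    rw [eLpNorm_congr_ae hdecomp]
    refine (eLpNorm_add_le (hub.mul hwv.1) (hAbar2.1.mul hvb) le_rfl).trans ?_
    exact add_le_add (hb1.trans_eq (mul_comm _ _)) hb2
  -- the conditional expectation part
  have hZT : eLpNorm (fun ω => Z ω - (P[T|G]) ω) 1 P ≤ K * δ + K * δ := by
    have h1 : (fun ω => Z ω - (P[T|G]) ω) =ᵐ[P] P[Z - T|G] := by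
      have := condExp_sub (μ := P) (m := G) hZint hTint
      filter_upwards [this] with ω hω
      simp only [Pi.sub_apply] at hω ⊢
      rw [hω, hZce]
    rw [eLpNorm_congr_ae h1]
    refine (eLpNorm_one_condExp_le_eLpNorm _).trans ?_
    rw [eLpNorm_sub_comm]
    exact hTZ
  -- combine
  have h3 : (fun ω => T ω - (P[T|G]) ω) =
      (fun ω => T ω - Z ω) + (fun ω => Z ω - (P[T|G]) ω) := by
    funext ω; simp only [Pi.add_apply]; ring
  calc eLpNorm (fun ω => T ω - (P[T|G]) ω) 1 P
      ≤ eLpNorm (fun ω => T ω - Z ω) 1 P + eLpNorm (fun ω => Z ω - (P[T|G]) ω) 1 P := by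
        rw [h3]
        exact eLpNorm_add_le (hTint.1.sub hZint.1) (hZint.1.sub hcem) le_rfl
    _ ≤ (K * δ + K * δ) + (K * δ + K * δ) := add_le_add hTZ hZT
    _ = 4 * K * δ := by ring

/-- If `U₁, …, U_L ∈ L²`, the entries of the `L×L` random matrix `W` are
`G`-measurable with `‖W i j · U i‖₂ ≤ K` and `‖W i j · U j‖₂ ≤ K`, the quadratic form
`Q = Σᵢⱼ Uᵢ W_{ij} Uⱼ` is integrable and `‖Uᵢ − E[Uᵢ|G]‖₂ ≤ δ` for all `i`, then
`E|Q − E[Q|G]| ≤ 4·K·L²·δ`. -/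
theorem stmt2 {Ω : Type*} {F : MeasurableSpace Ω} {P : Measure Ω}
    [IsProbabilityMeasure P] {G : MeasurableSpace Ω} (hG : G ≤ F)
    {L : ℕ} (U : Fin L → Ω → ℝ) (W : Fin L → Fin L → Ω → ℝ) (K δ : ℝ≥0∞)
    (hU : ∀ i, MemLp (U i) 2 P)
    (hWmeas : ∀ i j, StronglyMeasurable[G] (W i j))
    (hWUi : ∀ i j, MemLp (fun ω => W i j ω * U i ω) 2 P)
    (hWUj : ∀ i j, MemLp (fun ω => W i j ω * U j ω) 2 P)
    (hKi : ∀ i j, eLpNorm (fun ω => W i j ω * U i ω) 2 P ≤ K)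
    (hKj : ∀ i j, eLpNorm (fun ω => W i j ω * U j ω) 2 P ≤ K)
    (hQint : Integrable (fun ω => ∑ i, ∑ j, U i ω * W i j ω * U j ω) P)
    (hδ : ∀ i, eLpNorm (fun ω => U i ω - (P[U i|G]) ω) 2 P ≤ δ) :
    eLpNorm (fun ω => (∑ i, ∑ j, U i ω * W i j ω * U j ω) -
        (P[fun ω => ∑ i, ∑ j, U i ω * W i j ω * U j ω|G]) ω) 1 P ≤
      4 * K * (L : ℝ≥0∞) ^ 2 * δ := by
  haveI : SigmaFinite (P.trim hG) := inferInstance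
  set T : Fin L × Fin L → Ω → ℝ := fun p ω => U p.1 ω * W p.1 p.2 ω * U p.2 ω with hT
  have hTint : ∀ p : Fin L × Fin L, Integrable (T p) P := by
    intro p
    have h : T p = fun ω => (W p.1 p.2 ω * U p.1 ω) * U p.2 ω := by
      funext ω; simp only [hT]; ring
    rw [h]
    exact memLp_mul' (hWUi _ _) (hU _)
  have hQ : (fun ω => ∑ i, ∑ j, U i ω * W i j ω * U j ω) = ∑ p : Fin L × Fin L, T p := by
    funext ω
    rw [Finset.sum_apply]
    exact (Fintype.sum_prod_type (f := fun p : Fin L × Fin L => T p ω)).symm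
  have hkey : (fun ω => (∑ i, ∑ j, U i ω * W i j ω * U j ω) -
        (P[fun ω => ∑ i, ∑ j, U i ω * W i j ω * U j ω|G]) ω)
      =ᵐ[P] fun ω => ∑ p : Fin L × Fin L, (T p ω - (P[T p|G]) ω) := by
    have hsum : P[fun ω => ∑ i, ∑ j, U i ω * W i j ω * U j ω|G]
        =ᵐ[P] ∑ p : Fin L × Fin L, P[T p|G] := by
      rw [hQ]
      exact condExp_finsetSum (fun p _ => hTint p) G
    filter_upwards [hsum] with ω hω
    have h1 : (∑ i, ∑ j, U i ω * W i j ω * U j ω) = ∑ p : Fin L × Fin L, T p ω :=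
      (Fintype.sum_prod_type (f := fun p : Fin L × Fin L => T p ω)).symm
    rw [h1, hω, Finset.sum_apply, Finset.sum_sub_distrib]
  rw [eLpNorm_congr_ae hkey]
  have hfun : (fun ω => ∑ p : Fin L × Fin L, (T p ω - (P[T p|G]) ω)) =
      ∑ p : Fin L × Fin L, fun ω => T p ω - (P[T p|G]) ω := by
    funext ω; rw [Finset.sum_apply]
  rw [hfun]
  calc eLpNorm (∑ p : Fin L × Fin L, fun ω => T p ω - (P[T p|G]) ω) 1 P
      ≤ ∑ p : Fin L × Fin L, eLpNorm (fun ω => T p ω - (P[T p|G]) ω) 1 P :=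
        eLpNorm_sum_le (fun p _ =>
          (hTint p).1.sub (stronglyMeasurable_condExp.mono hG).aestronglyMeasurable) le_rfl
    _ ≤ ∑ _p : Fin L × Fin L, 4 * K * δ :=
        Finset.sum_le_sum fun p _ =>
          term_bound hG (hU p.1) (hU p.2) (hWmeas p.1 p.2) (hWUi p.1 p.2) (hWUj p.1 p.2)
            (hKi p.1 p.2) (hKj p.1 p.2) (hδ p.1) (hδ p.2)
    _ = 4 * K * (L : ℝ≥0∞) ^ 2 * δ := by
        rw [Finset.sum_const, Finset.card_univ, Fintype.card_prod, Fintype.card_fin,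
          nsmul_eq_mul]
        push_cast
        ring
end

section
/- Let Y* ∈ L²(P) be a real random variable, G ⊆ F a sub-σ-algebra, and ε > 0. Then ‖1{Y* ≥ 0} − E[1{Y* ≥ 0}|G]‖₂ ≤ (1/ε)·‖Y* − E[Y*|G]‖₂ + P( |Y*| < ε and |E[Y*|G]| < ε )^{1/2}. (This is the L² near-epoch-dependence bound for the Probit response established in the paper's appendix, obtained by comparing E[1{Y*≥0}|G] with the G-measurable approximation 1{E[Y*|G] ≥ 0} via the L²-projection property of conditional expectation.) -/
open MeasureTheory ProbabilityTheory ENNReal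

lemma condexp_ae_eq_condExpL2' {Ω : Type*} {F : MeasurableSpace Ω} {P : Measure Ω}
    [IsProbabilityMeasure P] {G : MeasurableSpace Ω} (hG : G ≤ F) (f : Lp ℝ 2 P) :
    (condExpL2 ℝ ℝ hG f : Ω → ℝ) =ᵐ[P] P[f|G] := by
  haveI : SigmaFinite (P.trim hG) := inferInstance
  refine ae_eq_condExp_of_forall_setIntegral_eq hG ((Lp.memLp f).integrable one_le_two)
    (fun s hs hμs => integrableOn_condExpL2_of_measure_ne_top hG hμs.ne f)
    (fun s hs hμs => ?_) (aestronglyMeasurable_condExpL2 hG f)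
  exact integral_condExpL2_eq hG f hs hμs.ne

lemma condexp_l2_proj {Ω : Type*} {F : MeasurableSpace Ω} {P : Measure Ω}
    [IsProbabilityMeasure P] {G : MeasurableSpace Ω} (hG : G ≤ F) {f Z : Ω → ℝ}
    (hf : MemLp f 2 P) (hZ : MemLp Z 2 P) (hZm : AEStronglyMeasurable[G] Z P) :
    eLpNorm (f - P[f|G]) 2 P ≤ eLpNorm (f - Z) 2 P := by
  haveI : Fact (G ≤ F) := ⟨hG⟩
  have hw : AEStronglyMeasurable[G]
      (⇑((condExpL2 ℝ ℝ hG (hf.toLp f) : Lp ℝ 2 P) - hZ.toLp Z)) P := by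
    refine AEStronglyMeasurable.congr ?_ (Lp.coeFn_sub _ _).symm
    exact (aestronglyMeasurable_condExpL2 hG (hf.toLp f)).sub (hZm.congr hZ.coeFn_toLp.symm)
  have horth : inner (𝕜 := ℝ) (hf.toLp f - (condExpL2 ℝ ℝ hG (hf.toLp f) : Lp ℝ 2 P))
      ((condExpL2 ℝ ℝ hG (hf.toLp f) : Lp ℝ 2 P) - hZ.toLp Z) = 0 := by
    rw [inner_sub_left, inner_condExpL2_eq_inner_fun hG (hf.toLp f) _ hw, sub_self]
  have key : ‖hf.toLp f - (condExpL2 ℝ ℝ hG (hf.toLp f) : Lp ℝ 2 P)‖ ≤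
      ‖hf.toLp f - hZ.toLp Z‖ := by
    have hdecomp : hf.toLp f - hZ.toLp Z =
        (hf.toLp f - (condExpL2 ℝ ℝ hG (hf.toLp f) : Lp ℝ 2 P)) +
        ((condExpL2 ℝ ℝ hG (hf.toLp f) : Lp ℝ 2 P) - hZ.toLp Z) := by abel
    have hsq : ‖hf.toLp f - hZ.toLp Z‖ ^ 2 =
        ‖hf.toLp f - (condExpL2 ℝ ℝ hG (hf.toLp f) : Lp ℝ 2 P)‖ ^ 2 +
        ‖(condExpL2 ℝ ℝ hG (hf.toLp f) : Lp ℝ 2 P) - hZ.toLp Z‖ ^ 2 := by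
      rw [hdecomp, norm_add_sq_real, horth]; ring
    nlinarith [norm_nonneg (hf.toLp f - (condExpL2 ℝ ℝ hG (hf.toLp f) : Lp ℝ 2 P)),
      norm_nonneg (hf.toLp f - hZ.toLp Z),
      sq_nonneg ‖(condExpL2 ℝ ℝ hG (hf.toLp f) : Lp ℝ 2 P) - hZ.toLp Z‖]
  have h1 : eLpNorm (f - P[f|G]) 2 P =
      eLpNorm (⇑(hf.toLp f - (condExpL2 ℝ ℝ hG (hf.toLp f) : Lp ℝ 2 P))) 2 P := by
    refine eLpNorm_congr_ae ?_
    filter_upwards [hf.coeFn_toLp, condexp_ae_eq_condExpL2' hG (hf.toLp f),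
      condExp_congr_ae (μ := P) (m := G) (hf.coeFn_toLp),
      Lp.coeFn_sub (hf.toLp f) ((condExpL2 ℝ ℝ hG (hf.toLp f) : Lp ℝ 2 P))] with ω h1 h2 h3 h4
    simp only [Pi.sub_apply, h4, h2, h3, h1]
  have h2 : eLpNorm (f - Z) 2 P = eLpNorm (⇑(hf.toLp f - hZ.toLp Z)) 2 P := by
    refine eLpNorm_congr_ae ?_
    filter_upwards [hf.coeFn_toLp, hZ.coeFn_toLp, Lp.coeFn_sub (hf.toLp f) (hZ.toLp Z)]
      with ω h1 h2 h3
    simp only [Pi.sub_apply, h3, h1, h2]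
  rw [h1, h2, ← ENNReal.toReal_le_toReal (Lp.eLpNorm_ne_top _) (Lp.eLpNorm_ne_top _),
    ← Lp.norm_def, ← Lp.norm_def]
  exact key

/-- For `Y* ∈ L²(P)`, a sub-σ-algebra `G` and `ε > 0`,
`‖1{Y* ≥ 0} − E[1{Y* ≥ 0}|G]‖₂ ≤ (1/ε)·‖Y* − E[Y*|G]‖₂ + P(|Y*| < ε ∧ |E[Y*|G]| < ε)^{1/2}`. -/
theorem stmt13 {Ω : Type*} {F : MeasurableSpace Ω} {P : Measure Ω}
    [IsProbabilityMeasure P] {G : MeasurableSpace Ω} (hG : G ≤ F)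
    (Y : Ω → ℝ) (hY : MemLp Y 2 P) (ε : ℝ) (hε : 0 < ε) :
    eLpNorm (fun ω => (if 0 ≤ Y ω then (1 : ℝ) else 0) -
        (P[fun ω => if 0 ≤ Y ω then (1 : ℝ) else 0|G]) ω) 2 P ≤
      ENNReal.ofReal (1 / ε) * eLpNorm (fun ω => Y ω - (P[Y|G]) ω) 2 P +
        (P {ω | |Y ω| < ε ∧ |(P[Y|G]) ω| < ε}) ^ (1/2 : ℝ) := by
  set E : Ω → ℝ := P[Y|G] with hE
  set D : Ω → ℝ := fun ω => if 0 ≤ Y ω then (1 : ℝ) else 0 with hD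
  set Z : Ω → ℝ := fun ω => if 0 ≤ E ω then (1 : ℝ) else 0 with hZ
  set A : Set Ω := {ω | |Y ω| < ε ∧ |E ω| < ε} with hA
  -- measurability facts
  obtain ⟨Y', hY'sm, hYY'⟩ := hY.aestronglyMeasurable
  have hEsm : StronglyMeasurable[F] E := stronglyMeasurable_condExp.mono hG
  have hDaesm : AEStronglyMeasurable[F] D P := by
    refine ⟨fun ω => if 0 ≤ Y' ω then (1 : ℝ) else 0, ?_, ?_⟩
    · exact StronglyMeasurable.ite (stronglyMeasurable_const.measurableSet_le hY'sm)
        stronglyMeasurable_const stronglyMeasurable_const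
    · filter_upwards [hYY'] with ω h; simp [D, h]
  have hDmem : MemLp D 2 P := by
    refine MemLp.of_bound hDaesm 1 (Filter.Eventually.of_forall fun ω => ?_)
    by_cases h : 0 ≤ Y ω <;> simp [D, h]
  have hZsm : StronglyMeasurable[G] Z :=
    StronglyMeasurable.ite (stronglyMeasurable_const.measurableSet_le stronglyMeasurable_condExp)
      stronglyMeasurable_const stronglyMeasurable_const
  have hZmem : MemLp Z 2 P := by
    refine MemLp.of_bound ((hZsm.mono hG).aestronglyMeasurable) 1
      (Filter.Eventually.of_forall fun ω => ?_)
    by_cases h : 0 ≤ E ω <;> simp [Z, h]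
  -- step 1 : projection
  have step1 : eLpNorm (fun ω => D ω - (P[D|G]) ω) 2 P ≤ eLpNorm (D - Z) 2 P :=
    condexp_l2_proj hG hDmem hZmem hZsm.aestronglyMeasurable
  -- pointwise bound
  set g : Ω → ℝ := fun ω => (1 / ε) * |Y ω - E ω| with hg
  set h : Ω → ℝ := A.indicator (fun _ => (1 : ℝ)) with hh
  have hbound : ∀ ω, |D ω - Z ω| ≤ g ω + h ω := by
    intro ω
    have hgnn : 0 ≤ g ω := mul_nonneg (by positivity) (abs_nonneg _)
    have hhnn : 0 ≤ h ω := Set.indicator_nonneg (fun _ _ => zero_le_one) ω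
    by_cases hYω : 0 ≤ Y ω <;> by_cases hEω : 0 ≤ E ω
    · simp only [D, Z, if_pos hYω, if_pos hEω, sub_self, abs_zero]; positivity
    · -- D = 1, Z = 0
      simp only [D, Z, if_pos hYω, if_neg hEω, sub_zero, abs_one]
      by_cases hωA : ω ∈ A
      · have : h ω = 1 := by simp [h, hωA]
        rw [this]; linarith
      · have hbig : ε ≤ |Y ω - E ω| := by
          rw [hA, Set.mem_setOf_eq, not_and_or] at hωA
          push_neg at hEω
          rcases hωA with h1 | h1 <;> push_neg at h1
          · rw [abs_of_nonneg hYω] at h1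
            rw [abs_of_nonneg (by linarith)]; linarith
          · rw [abs_of_neg (by linarith)] at h1
            rw [abs_of_nonneg (by linarith)]; linarith
        have : (1 : ℝ) ≤ g ω := by
          show (1 : ℝ) ≤ 1 / ε * |Y ω - E ω|
          calc (1 : ℝ) = (1/ε) * ε := by field_simp
          _ ≤ (1/ε) * |Y ω - E ω| := mul_le_mul_of_nonneg_left hbig (by positivity)
        linarith
    · -- D = 0, Z = 1
      simp only [D, Z, if_neg hYω, if_pos hEω, zero_sub, abs_neg, abs_one]
      by_cases hωA : ω ∈ A
      · have : h ω = 1 := by simp [h, hωA]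
        rw [this]; linarith
      · have hbig : ε ≤ |Y ω - E ω| := by
          rw [hA, Set.mem_setOf_eq, not_and_or] at hωA
          push_neg at hYω
          rcases hωA with h1 | h1 <;> push_neg at h1
          · rw [abs_of_neg (by linarith)] at h1
            rw [abs_of_nonpos (by linarith)]; linarith
          · rw [abs_of_nonneg hEω] at h1
            rw [abs_of_nonpos (by linarith)]; linarith
        have : (1 : ℝ) ≤ g ω := by
          show (1 : ℝ) ≤ 1 / ε * |Y ω - E ω|
          calc (1 : ℝ) = (1/ε) * ε := by field_simp
          _ ≤ (1/ε) * |Y ω - E ω| := mul_le_mul_of_nonneg_left hbig (by positivity)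
        linarith
    · simp only [D, Z, if_neg hYω, if_neg hEω, sub_self, abs_zero]; positivity
  -- step 2 : monotonicity
  have step2 : eLpNorm (D - Z) 2 P ≤ eLpNorm (fun ω => g ω + h ω) 2 P := by
    refine eLpNorm_mono fun ω => ?_
    rw [Real.norm_eq_abs, Real.norm_eq_abs]
    refine (hbound ω).trans (le_abs_self _)
  -- measurability of g and h
  have hgm : AEStronglyMeasurable[F] g P := by
    refine AEStronglyMeasurable.const_mul ?_ _
    exact ((hY.aestronglyMeasurable.sub hEsm.aestronglyMeasurable).norm).congr
      (Filter.Eventually.of_forall fun ω => by simp [Real.norm_eq_abs])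
  have hhm : AEStronglyMeasurable[F] h P := by
    refine ⟨({ω | |Y' ω| < ε ∧ |E ω| < ε} : Set Ω).indicator (fun _ => (1 : ℝ)), ?_, ?_⟩
    · refine stronglyMeasurable_const.indicator ?_
      have hm1 : MeasurableSet[F] {ω | |Y' ω| < ε} :=
        hY'sm.norm.measurableSet_lt stronglyMeasurable_const
      have hm2 : MeasurableSet[F] {ω | |E ω| < ε} :=
        hEsm.norm.measurableSet_lt stronglyMeasurable_const
      exact hm1.inter hm2
    · filter_upwards [hYY'] with ω hω
      simp only [h, Set.indicator, hA, Set.mem_setOf_eq, hω]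
  -- step 3 : triangle
  have step3 : eLpNorm (fun ω => g ω + h ω) 2 P ≤ eLpNorm g 2 P + eLpNorm h 2 P :=
    eLpNorm_add_le hgm hhm one_le_two
  -- step 4 : bound eLpNorm g
  have step4 : eLpNorm g 2 P ≤
      ENNReal.ofReal (1 / ε) * eLpNorm (fun ω => Y ω - E ω) 2 P := by
    have hsmul : g = (1 / ε : ℝ) • (fun ω => |Y ω - E ω|) := rfl
    rw [hsmul]
    refine (eLpNorm_const_smul_le).trans ?_
    have h1 : eLpNorm (fun ω => |Y ω - E ω|) 2 P = eLpNorm (fun ω => Y ω - E ω) 2 P :=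
      eLpNorm_congr_norm_ae (Filter.Eventually.of_forall fun ω => by
        simp [Real.norm_eq_abs, abs_abs])
    rw [h1, Real.enorm_eq_ofReal (one_div_nonneg.mpr hε.le)]
  -- step 5 : bound eLpNorm h
  have step5 : eLpNorm h 2 P ≤ (P A) ^ (1/2 : ℝ) := by
    refine (eLpNorm_indicator_const_le (1:ℝ) 2).trans ?_
    simp only [nnnorm_one, ENNReal.coe_one, one_mul, ENNReal.toReal_ofNat]
    norm_num
  calc eLpNorm (fun ω => D ω - (P[D|G]) ω) 2 P
      ≤ eLpNorm (D - Z) 2 P := step1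
    _ ≤ eLpNorm (fun ω => g ω + h ω) 2 P := step2
    _ ≤ eLpNorm g 2 P + eLpNorm h 2 P := step3
    _ ≤ ENNReal.ofReal (1 / ε) * eLpNorm (fun ω => Y ω - E ω) 2 P + (P A) ^ (1/2 : ℝ) :=
        add_le_add step4 step5
end

section
/- Let Y* ∈ L²(P) be a real random variable and G ⊆ F a sub-σ-algebra. Suppose there is a constant C ≥ 0 such that P(|Y*| < ε) ≤ C·ε for every ε > 0, and set δ := ‖Y* − E[Y*|G]‖₂. If δ > 0 then ‖1{Y* ≥ 0} − E[1{Y* ≥ 0}|G]‖₂ ≤ (1 + √C)·δ^{1/3}. (This quantifies the paper's conclusion that the binary Probit response inherits uniform L²-near-epoch dependence from the latent process, with NED coefficient a power of that of the latent process.) -/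
open MeasureTheory ProbabilityTheory ENNReal

theorem eLp2_eq {Ω : Type*} {F : MeasurableSpace Ω} {P : Measure Ω} [IsProbabilityMeasure P]
    (g : Ω → ℝ) (hg : MemLp g 2 P) :
    eLpNorm g 2 P = ENNReal.ofReal (Real.sqrt (∫ ω, g ω ^ 2 ∂P)) := by
  rw [eLpNorm_eq_lintegral_rpow_enorm_toReal two_ne_zero ENNReal.ofNat_ne_top]
  have h1 : ∀ ω, (‖g ω‖ₑ) ^ (2:ℝ≥0∞).toReal = ENNReal.ofReal (g ω ^ 2) := by
    intro ω
    rw [ENNReal.toReal_ofNat, ← ofReal_norm]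
    rw [show ((2:ℝ)) = ((2:ℕ):ℝ) by norm_num, ENNReal.rpow_natCast,
      ← ENNReal.ofReal_pow (norm_nonneg _)]
    congr 1
    rw [Real.norm_eq_abs, sq_abs]
  simp_rw [h1]
  rw [← ofReal_integral_eq_lintegral_ofReal hg.integrable_sq
    (Filter.Eventually.of_forall fun ω => sq_nonneg _)]
  rw [ENNReal.toReal_ofNat, ENNReal.ofReal_rpow_of_nonneg (integral_nonneg fun ω => sq_nonneg _)
    (by norm_num : (0:ℝ) ≤ 1/2)]
  rw [Real.sqrt_eq_rpow]

theorem pythagoras {Ω : Type*} {F : MeasurableSpace Ω} {P : Measure Ω} [IsProbabilityMeasure P]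
    {G : MeasurableSpace Ω} (hG : G ≤ F) (f h : Ω → ℝ)
    (hf_sm : StronglyMeasurable[F] f) (hh_sm : StronglyMeasurable[G] h)
    (hf_bd : ∀ ω, ‖f ω‖ ≤ 1) (hh_bd : ∀ ω, ‖h ω‖ ≤ 1) :
    ∫ ω, (f ω - (P[f|G]) ω) ^ 2 ∂P ≤ ∫ ω, (f ω - h ω) ^ 2 ∂P := by
  haveI : SigmaFinite (P.trim hG) := by
    exact @IsFiniteMeasure.toSigmaFinite _ _ _ (isFiniteMeasure_trim hG)
  set μf := P[f|G] with hμf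
  have hf_mem : MemLp f 2 P := MemLp.of_bound hf_sm.aestronglyMeasurable 1
    (Filter.Eventually.of_forall hf_bd)
  have hf_int : Integrable f P := hf_mem.integrable one_le_two
  have hμf_bd : ∀ᵐ ω ∂P, ‖μf ω‖ ≤ 1 := by
    have h1 : μf ≤ᵐ[P] fun _ => (1:ℝ) := by
      have := condExp_mono (m := G) hf_int (integrable_const (1:ℝ))
        (Filter.Eventually.of_forall fun ω => by
          have := hf_bd ω; rw [Real.norm_eq_abs, abs_le] at this; exact this.2)
      rwa [condExp_const hG] at this
    have h2 : (fun _ => (-1:ℝ)) ≤ᵐ[P] μf := by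
      have := condExp_mono (m := G) (integrable_const (-1:ℝ)) hf_int
        (Filter.Eventually.of_forall fun ω => by
          have := hf_bd ω; rw [Real.norm_eq_abs, abs_le] at this; exact this.1)
      rwa [condExp_const hG] at this
    filter_upwards [h1, h2] with ω h1 h2
    rw [Real.norm_eq_abs, abs_le]; exact ⟨h2, h1⟩
  have hμf_mem : MemLp μf 2 P :=
    MemLp.of_bound (stronglyMeasurable_condExp.mono hG).aestronglyMeasurable 1 hμf_bd
  have hD_mem : MemLp (fun ω => f ω - μf ω) 2 P := hf_mem.sub hμf_mem
  have hD_int : Integrable (fun ω => f ω - μf ω) P := hf_int.sub integrable_condExp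
  have hW_sm : StronglyMeasurable[G] (fun ω => μf ω - h ω) :=
    stronglyMeasurable_condExp.sub hh_sm
  have hW_bd : ∀ᵐ ω ∂P, ‖μf ω - h ω‖ ≤ 2 := by
    filter_upwards [hμf_bd] with ω h1
    calc ‖μf ω - h ω‖ ≤ ‖μf ω‖ + ‖h ω‖ := norm_sub_le _ _
      _ ≤ 1 + 1 := add_le_add h1 (hh_bd ω)
      _ = 2 := by norm_num
  have hW_mem : MemLp (fun ω => μf ω - h ω) 2 P :=
    MemLp.of_bound ((hW_sm.mono hG)).aestronglyMeasurable 2 hW_bd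
  -- cross term is zero
  have hWD_int : Integrable (fun ω => (μf ω - h ω) * (f ω - μf ω)) P :=
    hD_int.bdd_mul (hW_sm.mono hG).aestronglyMeasurable hW_bd
  have hPD : P[fun ω => f ω - μf ω|G] =ᵐ[P] 0 := by
    have h1 := condExp_sub (m := G) (μ := P) (f := f) (g := μf) hf_int integrable_condExp
    have h2 : P[μf|G] = μf :=
      condExp_of_stronglyMeasurable hG stronglyMeasurable_condExp integrable_condExp
    have heq : P[fun ω => f ω - μf ω|G] = P[f - μf|G] := rfl
    rw [heq]
    filter_upwards [h1] with ω hω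
    simp only [Pi.sub_apply] at hω ⊢
    rw [hω, h2]
    simp [hμf]
  have hcross : ∫ ω, (μf ω - h ω) * (f ω - μf ω) ∂P = 0 := by
    have hcond : P[(fun ω => μf ω - h ω) * (fun ω => f ω - μf ω)|G]
        =ᵐ[P] (fun ω => μf ω - h ω) * P[fun ω => f ω - μf ω|G] :=
      condExp_stronglyMeasurable_mul_of_bound hG hW_sm hD_int 2 hW_bd
    have h0 : (fun ω => μf ω - h ω) * P[fun ω => f ω - μf ω|G] =ᵐ[P] 0 := by
      filter_upwards [hPD] with ω hω
      simp only [Pi.mul_apply, hω, Pi.zero_apply, mul_zero]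
    calc ∫ ω, (μf ω - h ω) * (f ω - μf ω) ∂P
        = ∫ ω, (P[(fun ω => μf ω - h ω) * (fun ω => f ω - μf ω)|G]) ω ∂P :=
          (integral_condExp hG).symm
      _ = ∫ ω, (0:ℝ) ∂P := integral_congr_ae (hcond.trans h0)
      _ = 0 := by simp
  -- expansion
  have hexp : ∫ ω, (f ω - h ω) ^ 2 ∂P
      = ∫ ω, (f ω - μf ω) ^ 2 ∂P + (2 * ∫ ω, (μf ω - h ω) * (f ω - μf ω) ∂P
        + ∫ ω, (μf ω - h ω) ^ 2 ∂P) := by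
    have hfe : (fun ω => (f ω - h ω) ^ 2)
        = fun ω => (f ω - μf ω) ^ 2 + (2 * ((μf ω - h ω) * (f ω - μf ω)) + (μf ω - h ω) ^ 2) :=
      funext fun ω => by ring
    calc ∫ ω, (f ω - h ω) ^ 2 ∂P
        = ∫ ω, ((f ω - μf ω) ^ 2 + (2 * ((μf ω - h ω) * (f ω - μf ω)) + (μf ω - h ω) ^ 2)) ∂P := by
          rw [hfe]
      _ = ∫ ω, (f ω - μf ω) ^ 2 ∂P
            + ∫ ω, (2 * ((μf ω - h ω) * (f ω - μf ω)) + (μf ω - h ω) ^ 2) ∂P :=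
          integral_add hD_mem.integrable_sq ((hWD_int.const_mul 2).add hW_mem.integrable_sq)
      _ = ∫ ω, (f ω - μf ω) ^ 2 ∂P + (∫ ω, 2 * ((μf ω - h ω) * (f ω - μf ω)) ∂P
            + ∫ ω, (μf ω - h ω) ^ 2 ∂P) := by
          congr 1
          exact integral_add (hWD_int.const_mul 2) hW_mem.integrable_sq
      _ = ∫ ω, (f ω - μf ω) ^ 2 ∂P + (2 * ∫ ω, (μf ω - h ω) * (f ω - μf ω) ∂P
            + ∫ ω, (μf ω - h ω) ^ 2 ∂P) := by
          congr 2
          exact integral_const_mul 2 _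
  rw [hexp, hcross]
  nlinarith [integral_nonneg (f := fun ω => (μf ω - h ω) ^ 2) (fun ω => sq_nonneg (μf ω - h ω)) (μ := P)]

theorem pythagoras' {Ω : Type*} {F : MeasurableSpace Ω} {P : Measure Ω} [IsProbabilityMeasure P]
    {G : MeasurableSpace Ω} (hG : G ≤ F) (f h : Ω → ℝ)
    (hf_sm : StronglyMeasurable[F] f) (hh_sm : StronglyMeasurable[G] h)
    (hf_bd : ∀ ω, ‖f ω‖ ≤ 1) (hh_bd : ∀ ω, ‖h ω‖ ≤ 1) :
    eLpNorm (fun ω => f ω - (P[f|G]) ω) 2 P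
      ≤ ENNReal.ofReal (Real.sqrt (∫ ω, (f ω - h ω) ^ 2 ∂P)) := by
  haveI : SigmaFinite (P.trim hG) := by
    exact @IsFiniteMeasure.toSigmaFinite _ _ _ (isFiniteMeasure_trim hG)
  have hf_mem : MemLp f 2 P := MemLp.of_bound hf_sm.aestronglyMeasurable 1
    (Filter.Eventually.of_forall hf_bd)
  have hf_int : Integrable f P := hf_mem.integrable one_le_two
  have hμf_bd : ∀ᵐ ω ∂P, ‖(P[f|G]) ω‖ ≤ 1 := by
    have h1 : P[f|G] ≤ᵐ[P] fun _ => (1:ℝ) := by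
      have := condExp_mono (m := G) hf_int (integrable_const (1:ℝ))
        (Filter.Eventually.of_forall fun ω => by
          have := hf_bd ω; rw [Real.norm_eq_abs, abs_le] at this; exact this.2)
      rwa [condExp_const hG] at this
    have h2 : (fun _ => (-1:ℝ)) ≤ᵐ[P] P[f|G] := by
      have := condExp_mono (m := G) (integrable_const (-1:ℝ)) hf_int
        (Filter.Eventually.of_forall fun ω => by
          have := hf_bd ω; rw [Real.norm_eq_abs, abs_le] at this; exact this.1)
      rwa [condExp_const hG] at this
    filter_upwards [h1, h2] with ω h1 h2
    rw [Real.norm_eq_abs, abs_le]; exact ⟨h2, h1⟩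
  have hμf_mem : MemLp (P[f|G]) 2 P :=
    MemLp.of_bound (stronglyMeasurable_condExp.mono hG).aestronglyMeasurable 1 hμf_bd
  have hD_mem : MemLp (fun ω => f ω - (P[f|G]) ω) 2 P := hf_mem.sub hμf_mem
  rw [eLp2_eq _ hD_mem]
  apply ENNReal.ofReal_le_ofReal
  exact Real.sqrt_le_sqrt (pythagoras hG f h hf_sm hh_sm hf_bd hh_bd)

theorem integral_indicator_helper {Ω : Type*} [F : MeasurableSpace Ω] (P : Measure Ω)
    [IsProbabilityMeasure P] (s : Set Ω) (hs : MeasurableSet s) (g : Ω → ℝ)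
    (hg : ∀ ω, g ω = s.indicator (fun _ => (1:ℝ)) ω) : ∫ ω, g ω ∂P = (P s).toReal := by
  calc ∫ ω, g ω ∂P = ∫ ω, s.indicator (fun _ => (1:ℝ)) ω ∂P := by simp_rw [hg]
    _ = (P s).toReal • (1:ℝ) := integral_indicator_const (1:ℝ) hs
    _ = (P s).toReal := by simp

/-- Let `Y* ∈ L²(P)` and suppose `P(|Y*| < ε) ≤ C·ε` for every `ε > 0`.
Set `δ := ‖Y* − E[Y*|G]‖₂`. If `δ > 0` then
`‖1{Y* ≥ 0} − E[1{Y* ≥ 0}|G]‖₂ ≤ (1 + √C)·δ^{1/3}`. -/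
theorem stmt14 {Ω : Type*} {F : MeasurableSpace Ω} {P : Measure Ω}
    [IsProbabilityMeasure P] {G : MeasurableSpace Ω} (hG : G ≤ F)
    (Y : Ω → ℝ) (hY : MemLp Y 2 P) (C : ℝ) (hC : 0 ≤ C)
    (hsmall : ∀ ε : ℝ, 0 < ε → P {ω | |Y ω| < ε} ≤ ENNReal.ofReal (C * ε))
    (δ : ℝ≥0∞) (hδ : eLpNorm (fun ω => Y ω - (P[Y|G]) ω) 2 P = δ)
    (hδpos : 0 < δ) :
    eLpNorm (fun ω => (if 0 ≤ Y ω then (1 : ℝ) else 0) -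
        (P[fun ω => if 0 ≤ Y ω then (1 : ℝ) else 0|G]) ω) 2 P ≤
      ENNReal.ofReal (1 + Real.sqrt C) * δ ^ (1/3 : ℝ) := by
  haveI : SigmaFinite (P.trim hG) := by
    exact @IsFiniteMeasure.toSigmaFinite _ _ _ (isFiniteMeasure_trim hG)
  have hsqC : (0:ℝ) < 1 + Real.sqrt C := by positivity
  -- dispose of the case δ = ∞
  rcases eq_or_ne δ ∞ with hδtop | hδtop
  · have : ENNReal.ofReal (1 + Real.sqrt C) * δ ^ (1/3 : ℝ) = ⊤ := by
      rw [hδtop, ENNReal.top_rpow_of_pos (by norm_num)]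
      exact ENNReal.mul_top (ne_of_gt (ENNReal.ofReal_pos.mpr hsqC))
    rw [this]; exact le_top
  -- set up real number d with δ = ofReal d
  set d := δ.toReal with hd_def
  have hd : 0 < d := ENNReal.toReal_pos hδpos.ne' hδtop
  have hδd : δ = ENNReal.ofReal d := (ENNReal.ofReal_toReal hδtop).symm
  -- replace Y by a strongly measurable representative
  set Y' := hY.aestronglyMeasurable.mk Y with hY'def
  have hY'sm : StronglyMeasurable[F] Y' := hY.aestronglyMeasurable.stronglyMeasurable_mk
  have hYY' : Y =ᵐ[P] Y' := hY.aestronglyMeasurable.ae_eq_mk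
  set f : Ω → ℝ := fun ω => if 0 ≤ Y' ω then (1:ℝ) else 0 with hfdef
  have hff0 : (fun ω => if 0 ≤ Y ω then (1:ℝ) else 0) =ᵐ[P] f := by
    filter_upwards [hYY'] with ω h
    simp only [hfdef, h]
  have hLHS : eLpNorm (fun ω => (if 0 ≤ Y ω then (1 : ℝ) else 0) -
      (P[fun ω => if 0 ≤ Y ω then (1 : ℝ) else 0|G]) ω) 2 P
      = eLpNorm (fun ω => f ω - (P[f|G]) ω) 2 P := by
    apply eLpNorm_congr_ae
    filter_upwards [hff0, condExp_congr_ae (m := G) hff0] with ω h1 h2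
    rw [h1, h2]
  rw [hLHS]
  set Yh : Ω → ℝ := P[Y'|G] with hYhdef
  have hδ' : eLpNorm (fun ω => Y' ω - Yh ω) 2 P = δ := by
    rw [← hδ]
    apply eLpNorm_congr_ae
    filter_upwards [hYY', condExp_congr_ae (m := G) hYY'] with ω h1 h2
    rw [h1, h2]
  -- the G-measurable approximating indicator
  set h : Ω → ℝ := fun ω => if 0 ≤ Yh ω then (1:ℝ) else 0 with hhdef
  have hYh_smG : StronglyMeasurable[G] Yh := stronglyMeasurable_condExp
  have hh_smG : StronglyMeasurable[G] h := by
    have : MeasurableSet[G] {ω | 0 ≤ Yh ω} :=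
      measurableSet_le measurable_const hYh_smG.measurable
    exact (Measurable.ite this measurable_const measurable_const).stronglyMeasurable
  have hf_sm : StronglyMeasurable[F] f := by
    have : MeasurableSet[F] {ω | 0 ≤ Y' ω} :=
      measurableSet_le measurable_const hY'sm.measurable
    exact (Measurable.ite this measurable_const measurable_const).stronglyMeasurable
  have hf_bd : ∀ ω, ‖f ω‖ ≤ 1 := by
    intro ω; simp only [hfdef]; split <;> simp
  have hh_bd : ∀ ω, ‖h ω‖ ≤ 1 := by
    intro ω; simp only [hhdef]; split <;> simp
  -- the "bad" set
  set s : Set Ω := {ω | f ω ≠ h ω} with hsdef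
  have hs_meas : MeasurableSet[F] s := by
    have h1 : MeasurableSet[F] {ω | f ω = h ω} :=
      measurableSet_eq_fun hf_sm.measurable ((hh_smG.measurable).mono hG le_rfl)
    exact h1.compl
  have hind : ∀ ω, (f ω - h ω) ^ 2 = s.indicator (fun _ => (1:ℝ)) ω := by
    intro ω
    by_cases hmem : ω ∈ s
    · rw [Set.indicator_of_mem hmem]
      have : f ω ≠ h ω := hmem
      simp only [hfdef, hhdef] at this ⊢
      by_cases h1 : 0 ≤ Y' ω <;> by_cases h2 : 0 ≤ Yh ω <;>
        simp [h1, h2] at this ⊢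
    · rw [Set.indicator_of_notMem hmem]
      have : f ω = h ω := not_not.mp hmem
      rw [this]; ring
  have hint_sq : ∫ ω, (f ω - h ω) ^ 2 ∂P = (P s).toReal :=
    integral_indicator_helper (F := F) P s hs_meas _ hind
  -- choose ε
  set ε : ℝ := d ^ ((2:ℝ)/3) with hεdef
  have hε : 0 < ε := Real.rpow_pos_of_pos hd _
  -- inclusion of the bad set
  have hsub : s ⊆ {ω | |Y' ω| < ε} ∪ {ω | ε ≤ |Y' ω - Yh ω|} := by
    intro ω hω
    by_cases hsmall' : |Y' ω| < ε
    · exact Or.inl hsmall'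
    · right
      push_neg at hsmall'
      have hne : f ω ≠ h ω := hω
      simp only [hfdef, hhdef] at hne
      by_cases h1 : 0 ≤ Y' ω <;> by_cases h2 : 0 ≤ Yh ω <;> simp [h1, h2] at hne ⊢
      · -- 0 ≤ Y', Yh < 0
        have hY'ε : ε ≤ Y' ω := by rwa [abs_of_nonneg h1] at hsmall'
        push_neg at h2
        have : ε ≤ Y' ω - Yh ω := by linarith
        calc ε ≤ Y' ω - Yh ω := this
          _ ≤ |Y' ω - Yh ω| := le_abs_self _
      · -- Y' < 0, 0 ≤ Yh
        push_neg at h1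
        have hY'ε : ε ≤ -Y' ω := by rwa [abs_of_neg h1] at hsmall'
        have : ε ≤ Yh ω - Y' ω := by linarith
        calc ε ≤ Yh ω - Y' ω := this
          _ ≤ |Y' ω - Yh ω| := by rw [abs_sub_comm]; exact le_abs_self _
  -- Chebyshev
  have hcheb : P {ω | ε ≤ |Y' ω - Yh ω|} ≤ ENNReal.ofReal (d^2) / ENNReal.ofReal (ε^2) := by
    have hZ_sm : AEStronglyMeasurable[F] (fun ω => Y' ω - Yh ω) P :=
      (hY'sm.sub ((stronglyMeasurable_condExp (f := Y') (μ := P)).mono hG)).aestronglyMeasurable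
    have hc := mul_meas_ge_le_pow_eLpNorm P two_ne_zero ENNReal.ofNat_ne_top hZ_sm
      (ENNReal.ofReal (ε^2))
    rw [hδ'] at hc
    have hsub2 : {ω | ε ≤ |Y' ω - Yh ω|}
        ⊆ {x | ENNReal.ofReal (ε^2) ≤ ‖Y' x - Yh x‖ₑ ^ (2:ℝ≥0∞).toReal} := by
      intro ω hω
      simp only [Set.mem_setOf_eq] at hω ⊢
      rw [← ofReal_norm, ENNReal.toReal_ofNat,
        show ((2:ℝ)) = ((2:ℕ):ℝ) by norm_num, ENNReal.rpow_natCast,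
        ← ENNReal.ofReal_pow (norm_nonneg _)]
      apply ENNReal.ofReal_le_ofReal
      rw [Real.norm_eq_abs]
      nlinarith [hω, hε]
    have hmono := measure_mono (μ := P) hsub2
    have hδ2 : δ ^ (2:ℝ≥0∞).toReal = ENNReal.ofReal (d^2) := by
      rw [hδd, ENNReal.toReal_ofNat,
        ENNReal.ofReal_rpow_of_nonneg hd.le (by norm_num : (0:ℝ) ≤ 2)]
      congr 1
      rw [show ((2:ℝ)) = ((2:ℕ):ℝ) by norm_num, Real.rpow_natCast]
    rw [hδ2] at hc
    rw [ENNReal.le_div_iff_mul_le (Or.inl (ne_of_gt (ENNReal.ofReal_pos.mpr (by positivity))))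
      (Or.inl ENNReal.ofReal_ne_top)]
    calc P {ω | ε ≤ |Y' ω - Yh ω|} * ENNReal.ofReal (ε^2)
        = ENNReal.ofReal (ε^2) * P {ω | ε ≤ |Y' ω - Yh ω|} := mul_comm _ _
      _ ≤ ENNReal.ofReal (ε^2) * P {x | ENNReal.ofReal (ε^2)
            ≤ ‖Y' x - Yh x‖ₑ ^ (2:ℝ≥0∞).toReal} := by gcongr
      _ ≤ ENNReal.ofReal (d^2) := hc
  -- small ball for Y'
  have hsmall' : P {ω | |Y' ω| < ε} ≤ ENNReal.ofReal (C * ε) := by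
    have heq : P {ω | |Y' ω| < ε} = P {ω | |Y ω| < ε} := by
      apply measure_congr
      filter_upwards [hYY'] with ω hω
      show (|Y' ω| < ε) = (|Y ω| < ε)
      rw [hω]
    rw [heq]
    exact hsmall ε hε
  -- the division simplifies
  have hdiv : ENNReal.ofReal (d^2) / ENNReal.ofReal (ε^2) = ENNReal.ofReal (d ^ ((2:ℝ)/3)) := by
    rw [← ENNReal.ofReal_div_of_pos (by positivity)]
    congr 1
    rw [hεdef, ← Real.rpow_natCast (d ^ ((2:ℝ)/3)) 2, ← Real.rpow_mul hd.le,
      ← Real.rpow_natCast d 2, ← Real.rpow_sub hd]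
    norm_num
  -- total bound on P s
  have hPs : P s ≤ ENNReal.ofReal ((C + 1) * d ^ ((2:ℝ)/3)) := by
    calc P s ≤ P ({ω | |Y' ω| < ε} ∪ {ω | ε ≤ |Y' ω - Yh ω|}) := measure_mono hsub
      _ ≤ P {ω | |Y' ω| < ε} + P {ω | ε ≤ |Y' ω - Yh ω|} := measure_union_le _ _
      _ ≤ ENNReal.ofReal (C * ε) + ENNReal.ofReal (d ^ ((2:ℝ)/3)) := by
          rw [← hdiv]; exact add_le_add hsmall' hcheb
      _ = ENNReal.ofReal ((C + 1) * d ^ ((2:ℝ)/3)) := by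
          rw [← ENNReal.ofReal_add (by positivity) (by positivity)]
          congr 1
          rw [hεdef]; ring
  have hPs_real : (P s).toReal ≤ (C + 1) * d ^ ((2:ℝ)/3) := by
    have := ENNReal.toReal_mono ENNReal.ofReal_ne_top hPs
    rwa [ENNReal.toReal_ofReal (by positivity)] at this
  -- apply Pythagoras
  have hmain := pythagoras' (P := P) hG f h hf_sm hh_smG hf_bd hh_bd
  rw [hint_sq] at hmain
  refine hmain.trans ?_
  have hsqrt : Real.sqrt ((P s).toReal) ≤ (1 + Real.sqrt C) * d ^ ((1:ℝ)/3) := by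
    have h1 : Real.sqrt ((P s).toReal) ≤ Real.sqrt ((C + 1) * d ^ ((2:ℝ)/3)) :=
      Real.sqrt_le_sqrt hPs_real
    have h2b : Real.sqrt (d ^ ((2:ℝ)/3)) = d ^ ((1:ℝ)/3) := by
      rw [Real.sqrt_eq_rpow, ← Real.rpow_mul hd.le]
      norm_num
    have h2 : Real.sqrt ((C + 1) * d ^ ((2:ℝ)/3))
        = Real.sqrt (C + 1) * d ^ ((1:ℝ)/3) := by
      rw [Real.sqrt_mul (by positivity), h2b]
    have h3 : Real.sqrt (C + 1) ≤ 1 + Real.sqrt C := by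
      rw [show (1:ℝ) + Real.sqrt C = Real.sqrt ((1 + Real.sqrt C)^2) from
        (Real.sqrt_sq (by positivity)).symm]
      exact Real.sqrt_le_sqrt (by nlinarith [Real.sq_sqrt hC, Real.sqrt_nonneg C])
    calc Real.sqrt ((P s).toReal) ≤ Real.sqrt (C + 1) * d ^ ((1:ℝ)/3) := by rw [← h2]; exact h1
      _ ≤ (1 + Real.sqrt C) * d ^ ((1:ℝ)/3) := by
          apply mul_le_mul_of_nonneg_right h3 (by positivity)
  calc ENNReal.ofReal (Real.sqrt ((P s).toReal))
      ≤ ENNReal.ofReal ((1 + Real.sqrt C) * d ^ ((1:ℝ)/3)) := ENNReal.ofReal_le_ofReal hsqrt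
    _ = ENNReal.ofReal (1 + Real.sqrt C) * ENNReal.ofReal (d ^ ((1:ℝ)/3)) :=
        ENNReal.ofReal_mul hsqC.le
    _ = ENNReal.ofReal (1 + Real.sqrt C) * δ ^ (1/3 : ℝ) := by
        rw [hδd, ENNReal.ofReal_rpow_of_nonneg hd.le (by norm_num : (0:ℝ) ≤ 1/3)]
end
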